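/- Let ℓ ≥ 1 be odd and let i be an integer with 1 ≤ i ≤ ℓ−1. Then (−1)^i + Σ_{k=1}^{(ℓ−1)/2} 2cos(2π(2k−1)i/(2ℓ)) = 0, i.e. (−1)^i + c(i) + c(3i) + ... + c((ℓ−2)i) = 0 where c(t) = 2cos(2πt/(2ℓ)). -/

import Mathlib

open Real Finset

lemma tele (θ : ℝ) (m : ℕ) :
    (∑ k ∈ Finset.Icc 1 m, 2 * Real.cos ((2 * (k : ℝ) - 1) * θ)) * Real.sin θ
      = Real.sin (2 * m * θ) := by
  induction m with
  | zero => simp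
  | succ n ih =>
    rw [Finset.sum_Icc_succ_top (by omega), add_mul, ih]
    push_cast
    have h := Real.sin_sub_sin (2 * ((n : ℝ) + 1) * θ) (2 * (n : ℝ) * θ)
    have h1 : (2 * ((n : ℝ) + 1) * θ - 2 * (n : ℝ) * θ) / 2 = θ := by ring
    have h2 : (2 * ((n : ℝ) + 1) * θ + 2 * (n : ℝ) * θ) / 2 = (2 * ((n:ℝ)+1) - 1) * θ := by
      ring
    rw [h1, h2] at h
    nlinarith [h]

theorem stmt_14 (ℓ : ℕ) (hodd : Odd ℓ) (hℓ : 3 ≤ ℓ) (i : ℕ) (hi1 : 1 ≤ i) (hi : i ≤ ℓ - 1) :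
    (-1 : ℝ) ^ i
        + ∑ k ∈ Finset.Icc 1 ((ℓ - 1) / 2),
            2 * Real.cos (2 * π * (2 * (k : ℝ) - 1) * i / (2 * ℓ)) = 0 := by
  set θ : ℝ := π * i / ℓ with hθ
  have hℓpos : (0:ℝ) < ℓ := by positivity
  have hsum : ∀ k ∈ Finset.Icc 1 ((ℓ - 1) / 2),
      2 * Real.cos (2 * π * (2 * (k : ℝ) - 1) * i / (2 * ℓ))
        = 2 * Real.cos ((2 * (k:ℝ) - 1) * θ) := by
    intro k _
    rw [hθ]
    congr 1
    field_simp
  rw [Finset.sum_congr rfl hsum]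
  have hm : 2 * ((ℓ - 1) / 2) = ℓ - 1 := by
    obtain ⟨j, hj⟩ := hodd; omega
  have hipos : (0:ℝ) < i := by exact_mod_cast hi1
  have hiℓ : (i:ℝ) < ℓ := by exact_mod_cast (by omega : i < ℓ)
  have hθpos : 0 < θ := by
    rw [hθ]; exact div_pos (mul_pos Real.pi_pos hipos) hℓpos
  have hθlt : θ < π := by
    rw [hθ, div_lt_iff₀ hℓpos]
    calc π * i < π * ℓ := by
          exact mul_lt_mul_of_pos_left hiℓ Real.pi_pos
      _ = π * ℓ := rfl
  have hsin : Real.sin θ ≠ 0 := ne_of_gt (Real.sin_pos_of_pos_of_lt_pi hθpos hθlt)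
  have ht := tele θ ((ℓ - 1) / 2)
  have h2m : (2 * (((ℓ - 1) / 2 : ℕ)) : ℝ) = (ℓ:ℝ) - 1 := by
    have : ((2 * ((ℓ - 1) / 2) : ℕ) : ℝ) = ((ℓ - 1 : ℕ) : ℝ) := by rw [hm]
    push_cast [Nat.cast_sub (by omega : 1 ≤ ℓ)] at this
    push_cast
    linarith
  rw [h2m] at ht
  have harg : ((ℓ:ℝ) - 1) * θ = (i:ℝ) * π - θ := by
    rw [hθ]; field_simp
  rw [harg, Real.sin_nat_mul_pi_sub θ i] at ht
  have : ((-1:ℝ)^i + ∑ k ∈ Finset.Icc 1 ((ℓ - 1) / 2),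
      2 * Real.cos ((2 * (k:ℝ) - 1) * θ)) * Real.sin θ = 0 := by
    rw [add_mul, ht]; ring
  rcases mul_eq_zero.mp this with h | h
  · exact h
  · exact absurd h hsin
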